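/- Let E be an elliptic curve over F_q with Frobenius eigenvalues α, β (so αβ = q and α + β = a with |a| ≤ 2√q). If |E(F_{q^n})| ≡ 1 (mod q^n) for all n ≥ 1, then α^n + β^n is divisible by q^n in the algebraic integers for all n ≥ 1, which is impossible. -/
import Mathlib


/-- Let `E` be an elliptic curve over `F_q` with Frobenius eigenvalues `α, β`
(so `αβ = q` and `α + β = a` with `|a| ≤ 2√q`).  If `|E(F_{q^n})| ≡ 1 (mod q^n)` for all
`n ≥ 1` (where `|E(F_{q^n})| = q^n + 1 - (α^n + β^n)`), then `α^n + β^n` is divisible by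
`q^n` in the ring of algebraic integers for all `n ≥ 1`, which is impossible. -/
theorem stmt_2 (q : ℕ) (hq : IsPrimePow q) (α β : ℂ)
    (hα : IsIntegral ℤ α) (hβ : IsIntegral ℤ β)
    (hprod : α * β = (q : ℂ)) (a : ℤ) (hsum : α + β = (a : ℂ))
    (ha : (|a| : ℝ) ≤ 2 * Real.sqrt q)
    (count : ℕ → ℕ)
    (hcount : ∀ n : ℕ, 1 ≤ n → (count n : ℂ) = (q : ℂ) ^ n + 1 - (α ^ n + β ^ n))
    (hcong : ∀ n : ℕ, 1 ≤ n → count n ≡ 1 [MOD q ^ n]) :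
    (∀ n : ℕ, 1 ≤ n → IsIntegral ℤ ((α ^ n + β ^ n) / (q : ℂ) ^ n)) ∧ False := by
  have hq2 : 2 ≤ q := hq.two_le
  have hq0 : (q : ℂ) ≠ 0 := Nat.cast_ne_zero.mpr (by omega)
  have key : ∀ n : ℕ, 1 ≤ n → ∃ m : ℤ, α ^ n + β ^ n = (q : ℂ) ^ n * (m : ℂ) := by
    intro n hn
    obtain ⟨k, hk⟩ := (Nat.modEq_iff_dvd.mp (hcong n hn))
    refine ⟨1 + k, ?_⟩
    have h1 := hcount n hn
    have hkC : (1 : ℂ) - (count n : ℂ) = ((q : ℂ) ^ n) * (k : ℂ) := by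
      exact_mod_cast congrArg (Int.cast : ℤ → ℂ) hk
    push_cast
    linear_combination h1 + hkC
  constructor
  · intro n hn
    obtain ⟨m, hm⟩ := key n hn
    rw [hm, mul_div_cancel_left₀ _ (pow_ne_zero _ hq0)]
    exact isIntegral_algebraMap (x := m)
  · -- derive contradiction
    obtain ⟨m1, h1⟩ := key 1 le_rfl
    obtain ⟨m2, h2⟩ := key 2 (by norm_num)
    obtain ⟨m3, h3⟩ := key 3 (by norm_num)
    obtain ⟨m4, h4⟩ := key 4 (by norm_num)
    have e2 : α ^ 2 + β ^ 2 = (a : ℂ) ^ 2 - 2 * (q : ℂ) := by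
      rw [← hsum, ← hprod]; ring
    have e3 : α ^ 3 + β ^ 3 = (a : ℂ) ^ 3 - 3 * (q : ℂ) * (a : ℂ) := by
      rw [← hsum, ← hprod]; ring
    have e4 : α ^ 4 + β ^ 4 = (a : ℂ) ^ 4 - 4 * (q : ℂ) * (a : ℂ) ^ 2 + 2 * (q : ℂ) ^ 2 := by
      rw [← hsum, ← hprod]; ring
    simp only [pow_one] at h1
    rw [hsum] at h1
    rw [e2] at h2
    rw [e3] at h3
    rw [e4] at h4
    have E1 : a = (q : ℤ) * m1 := by exact_mod_cast h1
    have E2 : a ^ 2 - 2 * (q : ℤ) = (q : ℤ) ^ 2 * m2 := by exact_mod_cast h2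
    have E3 : a ^ 3 - 3 * (q : ℤ) * a = (q : ℤ) ^ 3 * m3 := by exact_mod_cast h3
    have E4 : a ^ 4 - 4 * (q : ℤ) * a ^ 2 + 2 * (q : ℤ) ^ 2 = (q : ℤ) ^ 4 * m4 := by
      exact_mod_cast h4
    have haR : ((a : ℝ)) ^ 2 ≤ 4 * (q : ℝ) := by
      have h0 : (0 : ℝ) ≤ (q : ℝ) := by positivity
      nlinarith [Real.sq_sqrt h0, Real.sqrt_nonneg (q : ℝ), sq_abs ((a : ℝ)),
        abs_nonneg ((a : ℝ))]
    have haZ : a ^ 2 ≤ 4 * (q : ℤ) := by exact_mod_cast haR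
    have hQ2 : (2 : ℤ) ≤ (q : ℤ) := by exact_mod_cast hq2
    -- first show q = 2
    have hcc : (q : ℤ) * ((q : ℤ) * (m1 ^ 2 - m2)) = (q : ℤ) * 2 := by
      linear_combination E2 - (a + (q : ℤ) * m1) * E1
    have hc : (q : ℤ) * (m1 ^ 2 - m2) = 2 :=
      mul_left_cancel₀ (by omega) hcc
    have hQle : (q : ℤ) ≤ 2 := Int.le_of_dvd (by norm_num) ⟨m1 ^ 2 - m2, hc.symm⟩
    have hQ : (q : ℤ) = 2 := le_antisymm hQle hQ2
    rw [hQ] at E1 E3 E4 haZ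
    subst E1
    have hb1 : -1 ≤ m1 := by nlinarith
    have hb2 : m1 ≤ 1 := by nlinarith
    interval_cases m1 <;> norm_num at E3 E4 <;> omega
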